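/- Let (X,d) be a geodesic δ-hyperbolic space and for each pair (x,y) choose a geodesic γ_{x,y} from x to y, defining γ(x,y,t) = γ_{x,y}(t·d(x,y)). Then γ is a (1, 8δ)-geodesic coarsely convex bicombing: for all x₁,x₂,y₁,y₂ ∈ X, a,b,c ∈ [0,1], with y₁' = γ(x₁,y₁,a), y₂' = γ(x₂,y₂,b), we have d(γ(x₁,y₁,ca), γ(x₂,y₂,cb)) ≤ (1−c)·d(x₁,x₂) + c·d(y₁',y₂') + 8δ. -/

import Mathlib

open Set

/-- `γ` is a geodesic bicombing on `X`. -/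
def IsGeodBicombing {X : Type*} [MetricSpace X] (γ : X → X → ℝ → X) : Prop :=
  (∀ x y : X, γ x y 0 = x) ∧ (∀ x y : X, γ x y 1 = y) ∧
    ∀ x y : X, ∀ t ∈ Icc (0:ℝ) 1, ∀ s ∈ Icc (0:ℝ) 1,
      dist (γ x y t) (γ x y s) = |t - s| * dist x y

/-- `f` is a (unit-speed) geodesic segment from `x` to `y`. -/
def IsGeodSegment {X : Type*} [MetricSpace X] (f : ℝ → X) (x y : X) : Prop :=
  f 0 = x ∧ f (dist x y) = y ∧
    ∀ s ∈ Icc (0:ℝ) (dist x y), ∀ t ∈ Icc (0:ℝ) (dist x y),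
      dist (f s) (f t) = |s - t|

/-- The Rips thin-triangle condition with constant `δ`: in any geodesic
triangle, every point on one side is within `δ` of the union of the other two
sides. -/
def RipsCondition (X : Type*) [MetricSpace X] (δ : ℝ) : Prop :=
  ∀ x y z : X, ∀ f g h : ℝ → X,
    IsGeodSegment f x y → IsGeodSegment g y z → IsGeodSegment h z x →
    ∀ t ∈ Icc (0:ℝ) (dist x y), ∃ u : X,
      ((∃ s ∈ Icc (0:ℝ) (dist y z), u = g s) ∨
        (∃ s ∈ Icc (0:ℝ) (dist z x), u = h s)) ∧ dist (f t) u ≤ δ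

/-- reversal of a geodesic segment -/
lemma seg_symm {X : Type*} [MetricSpace X] {f : ℝ → X} {x y : X}
    (h : IsGeodSegment f x y) : IsGeodSegment (fun s => f (dist x y - s)) y x := by
  obtain ⟨h0, h1, hd⟩ := h
  refine ⟨by simpa using h1, ?_, ?_⟩
  · rw [dist_comm y x]
    simpa using h0
  · intro s hs t ht
    rw [dist_comm y x] at hs ht
    rw [hd (dist x y - s) ⟨by linarith [hs.2], by linarith [hs.1]⟩
        (dist x y - t) ⟨by linarith [ht.2], by linarith [ht.1]⟩]
    rw [abs_sub_comm]
    ring_nf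

lemma comb_dist {X : Type*} [MetricSpace X] {γ : X → X → ℝ → X}
    (h : IsGeodBicombing γ) (x y : X) {a : ℝ} (ha : a ∈ Icc (0:ℝ) 1) :
    dist x (γ x y a) = a * dist x y := by
  have h2 := h.2.2 x y 0 ⟨le_refl _, zero_le_one⟩ a ha
  rw [h.1] at h2
  rw [h2, abs_of_nonpos (by linarith [ha.1] : (0:ℝ) - a ≤ 0)]
  ring

lemma comb_seg {X : Type*} [MetricSpace X] {γ : X → X → ℝ → X}
    (h : IsGeodBicombing γ) (x y : X) {a : ℝ} (ha : a ∈ Icc (0:ℝ) 1) :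
    IsGeodSegment (fun s => γ x y (s / dist x y)) x (γ x y a) := by
  have hd := comb_dist h x y ha
  have hdn : (0:ℝ) ≤ dist x y := dist_nonneg
  rcases eq_or_lt_of_le hdn with h0 | hpos
  · have hxy : γ x y a = x := by
      have hz : dist x (γ x y a) = 0 := by rw [hd, ← h0]; ring
      rw [dist_eq_zero] at hz
      exact hz.symm
    refine ⟨?_, ?_, ?_⟩
    · simp [zero_div, h.1]
    · rw [hxy]
      have : dist x x = 0 := dist_self x
      simp [this, zero_div, h.1]
    · intro s hs t ht
      rw [hxy, dist_self x] at hs ht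
      have hs0 : s = 0 := le_antisymm hs.2 hs.1
      have ht0 : t = 0 := le_antisymm ht.2 ht.1
      subst hs0; subst ht0
      simp
  · refine ⟨?_, ?_, ?_⟩
    · simp [zero_div, h.1]
    · show γ x y (dist x (γ x y a) / dist x y) = γ x y a
      rw [hd, mul_div_assoc, div_self (ne_of_gt hpos), mul_one]
    · intro s hs t ht
      rw [hd] at hs ht
      have ha1 : a * dist x y ≤ dist x y := by nlinarith [ha.2]
      have hsm : s / dist x y ∈ Icc (0:ℝ) 1 :=
        ⟨div_nonneg hs.1 hdn, (div_le_one hpos).2 (le_trans hs.2 ha1)⟩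
      have htm : t / dist x y ∈ Icc (0:ℝ) 1 :=
        ⟨div_nonneg ht.1 hdn, (div_le_one hpos).2 (le_trans ht.2 ha1)⟩
      rw [h.2.2 x y _ hsm _ htm, div_sub_div_same, abs_div,
        abs_of_pos hpos, div_mul_cancel₀ _ (ne_of_gt hpos)]

lemma comb_seg_full {X : Type*} [MetricSpace X] {γ : X → X → ℝ → X}
    (h : IsGeodBicombing γ) (x y : X) :
    IsGeodSegment (fun s => γ x y (s / dist x y)) x y := by
  have := comb_seg h x y (a := 1) ⟨zero_le_one, le_refl 1⟩
  rwa [h.2.1] at this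

lemma comb_eval {X : Type*} [MetricSpace X] {γ : X → X → ℝ → X}
    (h : IsGeodBicombing γ) (x y : X) {a c : ℝ}
    (ha : a ∈ Icc (0:ℝ) 1) (hc : c ∈ Icc (0:ℝ) 1) :
    γ x y (c * dist x (γ x y a) / dist x y) = γ x y (c * a) := by
  have hdn : (0:ℝ) ≤ dist x y := dist_nonneg
  rcases eq_or_lt_of_le hdn with h0 | hpos
  · have key : ∀ t ∈ Icc (0:ℝ) 1, γ x y t = x := by
      intro t ht
      have h2 := h.2.2 x y t ht 0 ⟨le_refl _, zero_le_one⟩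
      rw [h.1] at h2
      have hz : dist (γ x y t) x = 0 := by rw [h2, ← h0]; ring
      rwa [dist_eq_zero] at hz
    have hca : c * a ∈ Icc (0:ℝ) 1 :=
      ⟨mul_nonneg hc.1 ha.1, mul_le_one₀ hc.2 ha.1 ha.2⟩
    rw [key _ hca, ← h0, div_zero, h.1]
  · rw [comb_dist h x y ha]
    congr 1
    field_simp

/-- Same-start convexity: points at fraction `c` along two geodesics starting
at `x` are at distance at most `c * dist y z + 4δ`. -/
lemma lemA {X : Type*} [MetricSpace X] {δ : ℝ} (hδ : 0 ≤ δ)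
    (hyp : RipsCondition X δ) {f g m : ℝ → X} {x y z : X}
    (hf : IsGeodSegment f x y) (hg : IsGeodSegment g x z)
    (hm : IsGeodSegment m y z) {c : ℝ} (hc : c ∈ Icc (0:ℝ) 1) :
    dist (f (c * dist x y)) (g (c * dist x z)) ≤ c * dist y z + 4 * δ := by
  obtain ⟨hc0, hc1⟩ := hc
  have hL1n : (0:ℝ) ≤ dist x y := dist_nonneg
  have hL2n : (0:ℝ) ≤ dist x z := dist_nonneg
  have hL3n : (0:ℝ) ≤ dist y z := dist_nonneg
  have hcL1 : c * dist x y ∈ Icc (0:ℝ) (dist x y) :=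
    ⟨mul_nonneg hc0 hL1n, by nlinarith⟩
  have hcL2 : c * dist x z ∈ Icc (0:ℝ) (dist x z) :=
    ⟨mul_nonneg hc0 hL2n, by nlinarith⟩
  have h0L1 : (0:ℝ) ∈ Icc (0:ℝ) (dist x y) := ⟨le_refl _, hL1n⟩
  have h0L2 : (0:ℝ) ∈ Icc (0:ℝ) (dist x z) := ⟨le_refl _, hL2n⟩
  have h1L1 : dist x y ∈ Icc (0:ℝ) (dist x y) := ⟨hL1n, le_refl _⟩
  have h1L2 : dist x z ∈ Icc (0:ℝ) (dist x z) := ⟨hL2n, le_refl _⟩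
  -- distances to basepoints
  have hxp : dist x (f (c * dist x y)) = c * dist x y := by
    have e := hf.2.2 0 h0L1 (c * dist x y) hcL1
    rw [hf.1] at e
    rw [e, abs_of_nonpos (by linarith [hcL1.1] : 0 - c * dist x y ≤ 0)]
    ring
  have hpy : dist (f (c * dist x y)) y = (1 - c) * dist x y := by
    have e := hf.2.2 (c * dist x y) hcL1 (dist x y) h1L1
    rw [hf.2.1] at e
    rw [e, abs_of_nonpos (by linarith [hcL1.2] : c * dist x y - dist x y ≤ 0)]
    ring
  have hxq : dist x (g (c * dist x z)) = c * dist x z := by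
    have e := hg.2.2 0 h0L2 (c * dist x z) hcL2
    rw [hg.1] at e
    rw [e, abs_of_nonpos (by linarith [hcL2.1] : 0 - c * dist x z ≤ 0)]
    ring
  have hqz : dist (g (c * dist x z)) z = (1 - c) * dist x z := by
    have e := hg.2.2 (c * dist x z) hcL2 (dist x z) h1L2
    rw [hg.2.1] at e
    rw [e, abs_of_nonpos (by linarith [hcL2.2] : c * dist x z - dist x z ≤ 0)]
    ring
  -- triangle inequality between side lengths
  have hT5 : dist y z ≤ dist x y + dist x z := by
    rw [dist_comm x y] at *
    exact dist_triangle y x z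
  have hkey : dist y z - c * dist y z ≤
      dist x y + dist x z - c * dist x y - c * dist x z := by
    calc dist y z - c * dist y z = (1 - c) * dist y z := by ring
      _ ≤ (1 - c) * (dist x y + dist x z) :=
          mul_le_mul_of_nonneg_left hT5 (by linarith)
      _ = dist x y + dist x z - c * dist x y - c * dist x z := by ring
  -- Rips applied to p on side [x,y] of triangle (x,y,z)
  obtain ⟨u, hu_loc, hup⟩ :=
    hyp x y z f m (fun s => g (dist x z - s)) hf hm (seg_symm hg)
      (c * dist x y) hcL1
  -- Rips applied to q on side [x,z] of triangle (x,z,y)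
  obtain ⟨v, hv_loc, hvq⟩ :=
    hyp x z y g (fun s => m (dist y z - s)) (fun s => f (dist x y - s)) hg
      (seg_symm hm) (seg_symm hf) (c * dist x z) hcL2
  rcases hu_loc with ⟨su, hsu, rfl⟩ | ⟨s, hs, rfl⟩
  · -- u lies on m
    rcases hv_loc with ⟨sv, hsv, rfl⟩ | ⟨sv, hsv, rfl⟩
    · -- v lies on m too : main case
      rw [dist_comm z y] at hsv
      have hLu : su ∈ Icc (0:ℝ) (dist y z) := hsu
      have hLv : dist y z - sv ∈ Icc (0:ℝ) (dist y z) :=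
        ⟨by linarith [hsv.2], by linarith [hsv.1]⟩
      have h0L3 : (0:ℝ) ∈ Icc (0:ℝ) (dist y z) := ⟨le_refl _, hL3n⟩
      have h1L3 : dist y z ∈ Icc (0:ℝ) (dist y z) := ⟨hL3n, le_refl _⟩
      have hyu : dist y (m su) = su := by
        have e := hm.2.2 0 h0L3 su hLu
        rw [hm.1] at e
        rw [e, abs_of_nonpos (by linarith [hLu.1] : 0 - su ≤ 0)]
        ring
      have huz : dist (m su) z = dist y z - su := by
        have e := hm.2.2 su hLu (dist y z) h1L3
        rw [hm.2.1] at e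
        rw [e, abs_of_nonpos (by linarith [hLu.2] : su - dist y z ≤ 0)]
        ring
      have hyv : dist y (m (dist y z - sv)) = dist y z - sv := by
        have e := hm.2.2 0 h0L3 (dist y z - sv) hLv
        rw [hm.1] at e
        rw [e, abs_of_nonpos (by linarith [hLv.1] : 0 - (dist y z - sv) ≤ 0)]
        ring
      have hvz : dist (m (dist y z - sv)) z = sv := by
        have e := hm.2.2 (dist y z - sv) hLv (dist y z) h1L3
        rw [hm.2.1] at e
        rw [e, abs_of_nonpos (by linarith [hLv.2] : dist y z - sv - dist y z ≤ 0)]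
        ring
      have huv : dist (m su) (m (dist y z - sv)) = |su - (dist y z - sv)| :=
        hm.2.2 _ hLu _ hLv
      have F1 : dist x z ≤ dist x (f (c * dist x y)) + dist (f (c * dist x y)) (m su)
          + dist (m su) z := dist_triangle4 _ _ _ _
      have F2 : dist x y ≤ dist x (g (c * dist x z))
          + dist (g (c * dist x z)) (m (dist y z - sv))
          + dist (m (dist y z - sv)) y := dist_triangle4 _ _ _ _
      have F3 : dist (f (c * dist x y)) y ≤ dist (f (c * dist x y)) (m su)
          + dist (m su) y := dist_triangle _ _ _
      have F4 : dist (g (c * dist x z)) z ≤ dist (g (c * dist x z)) (m (dist y z - sv))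
          + dist (m (dist y z - sv)) z := dist_triangle _ _ _
      rw [hxp, huz] at F1
      rw [hxq, dist_comm (m (dist y z - sv)) y, hyv] at F2
      rw [hpy, dist_comm (m su) y, hyu] at F3
      rw [hqz, hvz] at F4
      have hqv : dist (g (c * dist x z)) (m (dist y z - sv)) ≤ δ := hvq
      have habs : |su - (dist y z - sv)| ≤ c * dist y z + 2 * δ := by
        refine abs_le.mpr ⟨?_, ?_⟩
        · linarith [hkey, F1, F2, F3, F4, hup, hqv]
        · linarith [hkey, F1, F2, F3, F4, hup, hqv]
      calc dist (f (c * dist x y)) (g (c * dist x z))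
          ≤ dist (f (c * dist x y)) (m su) + dist (m su) (m (dist y z - sv))
              + dist (m (dist y z - sv)) (g (c * dist x z)) := dist_triangle4 _ _ _ _
        _ ≤ δ + (c * dist y z + 2 * δ) + δ := by
            rw [huv, dist_comm _ (g (c * dist x z))]
            exact add_le_add (add_le_add hup habs) hqv
        _ ≤ c * dist y z + 4 * δ := by linarith
    · -- v lies on f : short route
      rw [dist_comm y x] at hsv
      have hLv : dist x y - sv ∈ Icc (0:ℝ) (dist x y) :=
        ⟨by linarith [hsv.2], by linarith [hsv.1]⟩
      have hxv : dist x (f (dist x y - sv)) = dist x y - sv := by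
        have e := hf.2.2 0 h0L1 (dist x y - sv) hLv
        rw [hf.1] at e
        rw [e, abs_of_nonpos (by linarith [hLv.1] : 0 - (dist x y - sv) ≤ 0)]
        ring
      have hpv : dist (f (c * dist x y)) (f (dist x y - sv))
          = |c * dist x y - (dist x y - sv)| := hf.2.2 _ hcL1 _ hLv
      have h1 : |(dist x y - sv) - c * dist x z| ≤ δ := by
        have := abs_dist_sub_le (f (dist x y - sv)) (g (c * dist x z)) x
        rw [dist_comm _ x, dist_comm _ x, hxv, hxq] at this
        calc |(dist x y - sv) - c * dist x z|
            ≤ dist (f (dist x y - sv)) (g (c * dist x z)) := this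
          _ = dist (g (c * dist x z)) (f (dist x y - sv)) := dist_comm _ _
          _ ≤ δ := hvq
      have h2 : |dist x y - dist x z| ≤ dist y z := by
        have := abs_dist_sub_le y z x
        rwa [dist_comm y x, dist_comm z x] at this
      obtain ⟨h1a, h1b⟩ := abs_le.mp h1
      obtain ⟨h2a, h2b⟩ := abs_le.mp h2
      have h4 : c * dist x y - c * dist x z ≤ c * dist y z := by nlinarith
      have h5 : c * dist x z - c * dist x y ≤ c * dist y z := by nlinarith
      have habs : |c * dist x y - (dist x y - sv)| ≤ δ + c * dist y z :=
        abs_le.mpr ⟨by linarith, by linarith⟩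
      calc dist (f (c * dist x y)) (g (c * dist x z))
          ≤ dist (f (c * dist x y)) (f (dist x y - sv))
              + dist (f (dist x y - sv)) (g (c * dist x z)) := dist_triangle _ _ _
        _ ≤ (δ + c * dist y z) + δ := by
            rw [hpv]
            refine add_le_add habs ?_
            rw [dist_comm]
            exact hvq
        _ ≤ c * dist y z + 4 * δ := by linarith
  · -- u lies on the geodesic g from x to z : short route
    rw [dist_comm z x] at hs
    have hLs : dist x z - s ∈ Icc (0:ℝ) (dist x z) :=
      ⟨by linarith [hs.2], by linarith [hs.1]⟩
    have hxu : dist x (g (dist x z - s)) = dist x z - s := by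
      have e := hg.2.2 0 h0L2 (dist x z - s) hLs
      rw [hg.1] at e
      rw [e, abs_of_nonpos (by linarith [hLs.1] : 0 - (dist x z - s) ≤ 0)]
      ring
    have huq : dist (g (dist x z - s)) (g (c * dist x z))
        = |(dist x z - s) - c * dist x z| := hg.2.2 _ hLs _ hcL2
    have h1 : |(dist x z - s) - c * dist x y| ≤ δ := by
      have := abs_dist_sub_le (g (dist x z - s)) (f (c * dist x y)) x
      rw [dist_comm _ x, dist_comm _ x, hxu, hxp] at this
      calc |(dist x z - s) - c * dist x y| ≤ dist (g (dist x z - s)) (f (c * dist x y)) := this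
        _ = dist (f (c * dist x y)) (g (dist x z - s)) := dist_comm _ _
        _ ≤ δ := hup
    have h2 : |dist x y - dist x z| ≤ dist y z := by
      have := abs_dist_sub_le y z x
      rwa [dist_comm y x, dist_comm z x] at this
    obtain ⟨h1a, h1b⟩ := abs_le.mp h1
    obtain ⟨h2a, h2b⟩ := abs_le.mp h2
    have h4 : c * dist x y - c * dist x z ≤ c * dist y z := by nlinarith
    have h5 : c * dist x z - c * dist x y ≤ c * dist y z := by nlinarith
    have habs : |(dist x z - s) - c * dist x z| ≤ δ + c * dist y z :=
      abs_le.mpr ⟨by linarith, by linarith⟩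
    calc dist (f (c * dist x y)) (g (c * dist x z))
        ≤ dist (f (c * dist x y)) (g (dist x z - s))
            + dist (g (dist x z - s)) (g (c * dist x z)) := dist_triangle _ _ _
      _ ≤ δ + (δ + c * dist y z) := by rw [huq]; exact add_le_add hup habs
      _ ≤ c * dist y z + 4 * δ := by linarith

/-- Same-end convexity, obtained by reversing. -/
lemma lemB {X : Type*} [MetricSpace X] {δ : ℝ} (hδ : 0 ≤ δ)
    (hyp : RipsCondition X δ) {f g m : ℝ → X} {x₁ x₂ y : X}
    (hf : IsGeodSegment f x₁ y) (hg : IsGeodSegment g x₂ y)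
    (hm : IsGeodSegment m x₁ x₂) {c : ℝ} (hc : c ∈ Icc (0:ℝ) 1) :
    dist (f (c * dist x₁ y)) (g (c * dist x₂ y)) ≤ (1 - c) * dist x₁ x₂ + 4 * δ := by
  have h := lemA hδ hyp (seg_symm hf) (seg_symm hg) hm
    (c := 1 - c) ⟨by linarith [hc.2], by linarith [hc.1]⟩
  have e1 : dist x₁ y - (1 - c) * dist y x₁ = c * dist x₁ y := by
    rw [dist_comm y x₁]; ring
  have e2 : dist x₂ y - (1 - c) * dist y x₂ = c * dist x₂ y := by
    rw [dist_comm y x₂]; ring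
  rw [e1, e2] at h
  calc dist (f (c * dist x₁ y)) (g (c * dist x₂ y))
      ≤ (1 - c) * dist x₁ x₂ + 4 * δ := h

/-- A geodesic bicombing obtained by choosing geodesics in a geodesic
`δ`-hyperbolic space is a `(1, 8δ)`-geodesic coarsely convex bicombing. -/
theorem stmt5 {X : Type*} [MetricSpace X] (δ : ℝ) (hδ : 0 ≤ δ)
    (hyp : RipsCondition X δ)
    (γ : X → X → ℝ → X) (hgeod : IsGeodBicombing γ) :
    ∀ x₁ x₂ y₁ y₂ : X, ∀ a ∈ Icc (0:ℝ) 1, ∀ b ∈ Icc (0:ℝ) 1, ∀ c ∈ Icc (0:ℝ) 1,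
      dist (γ x₁ y₁ (c * a)) (γ x₂ y₂ (c * b)) ≤
        (1 - c) * dist x₁ x₂ + c * dist (γ x₁ y₁ a) (γ x₂ y₂ b) + 8 * δ := by
  intro x₁ x₂ y₁ y₂ a ha b hb c hc
  -- segments from the bicombing
  have hf₁ : IsGeodSegment (fun s => γ x₁ y₁ (s / dist x₁ y₁)) x₁ (γ x₁ y₁ a) :=
    comb_seg hgeod x₁ y₁ ha
  have hg₂ : IsGeodSegment (fun s => γ x₂ y₂ (s / dist x₂ y₂)) x₂ (γ x₂ y₂ b) :=
    comb_seg hgeod x₂ y₂ hb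
  have hr : IsGeodSegment
      (fun s => γ x₁ (γ x₂ y₂ b) (s / dist x₁ (γ x₂ y₂ b))) x₁ (γ x₂ y₂ b) :=
    comb_seg_full hgeod x₁ (γ x₂ y₂ b)
  have hm₁ : IsGeodSegment
      (fun s => γ (γ x₁ y₁ a) (γ x₂ y₂ b) (s / dist (γ x₁ y₁ a) (γ x₂ y₂ b)))
      (γ x₁ y₁ a) (γ x₂ y₂ b) :=
    comb_seg_full hgeod (γ x₁ y₁ a) (γ x₂ y₂ b)
  have hm₂ : IsGeodSegment (fun s => γ x₁ x₂ (s / dist x₁ x₂)) x₁ x₂ :=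
    comb_seg_full hgeod x₁ x₂
  -- the two halves
  have step1 := lemA hδ hyp hf₁ hr hm₁ hc
  have step2 := lemB hδ hyp hr hg₂ hm₂ hc
  rw [comb_eval hgeod x₁ y₁ ha hc] at step1
  rw [comb_eval hgeod x₂ y₂ hb hc] at step2
  calc dist (γ x₁ y₁ (c * a)) (γ x₂ y₂ (c * b))
      ≤ dist (γ x₁ y₁ (c * a)) (γ x₁ (γ x₂ y₂ b) (c * dist x₁ (γ x₂ y₂ b) / dist x₁ (γ x₂ y₂ b)))
        + dist (γ x₁ (γ x₂ y₂ b) (c * dist x₁ (γ x₂ y₂ b) / dist x₁ (γ x₂ y₂ b)))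
            (γ x₂ y₂ (c * b)) := dist_triangle _ _ _
    _ ≤ (c * dist (γ x₁ y₁ a) (γ x₂ y₂ b) + 4 * δ)
        + ((1 - c) * dist x₁ x₂ + 4 * δ) := add_le_add step1 step2
    _ = (1 - c) * dist x₁ x₂ + c * dist (γ x₁ y₁ a) (γ x₂ y₂ b) + 8 * δ := by ring
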